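/- Let K be a field and M an A × B matrix over K, with Π a partition of the column set B into n classes. If for every subset Θ of Π the rank of the submatrix M[A, ⋃Θ] is at least k + |Θ| − n, then there exists a partial transversal P of Π with |P| = k such that the submatrix M[A, P] has rank k. -/

import Mathlib

open Submodule Module Set Matrix

section RadoAux

variable {K : Type*} [Field K] {A B : Type*} [Fintype A] [Fintype B]
  [DecidableEq B] {n : ℕ}

/-- rank of the set of columns indexed by `S`. -/
noncomputable def radoR (f : B → (A → K)) (S : Finset B) : ℕ :=
  finrank K (span K (f '' ↑S))

lemma radoR_mono (f : B → (A → K)) {S T : Finset B} (h : S ⊆ T) :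
    radoR f S ≤ radoR f T :=
  Submodule.finrank_mono (span_mono (Set.image_mono (by exact_mod_cast h)))

lemma radoR_submodular (f : B → (A → K)) (S T : Finset B) :
    radoR f (S ∪ T) + radoR f (S ∩ T) ≤ radoR f S + radoR f T := by
  unfold radoR
  have h1 : span K (f '' ↑(S ∪ T)) = span K (f '' ↑S) ⊔ span K (f '' ↑T) := by
    rw [Finset.coe_union, Set.image_union, Submodule.span_union]
  have h2 : span K (f '' ↑(S ∩ T)) ≤ span K (f '' ↑S) ⊓ span K (f '' ↑T) := by
    refine le_inf ?_ ?_ <;> refine span_mono (Set.image_mono ?_) <;>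
      intro j hj <;> simp only [Finset.coe_inter, Set.mem_inter_iff] at hj
    · exact hj.1
    · exact hj.2
  have h3 := Submodule.finrank_sup_add_finrank_inf_eq (span K (f '' ↑S)) (span K (f '' ↑T))
  have h4 : finrank K (span K (f '' ↑(S ∩ T))) ≤
      finrank K ↑(span K (f '' ↑S) ⊓ span K (f '' ↑T)) := Submodule.finrank_mono h2
  rw [h1]
  omega

/-- The main inductive lemma, Rado's theorem for the linear matroid on columns. -/
lemma rado_aux (f : B → (A → K)) (b : B → Fin n) (k : ℕ) (D : Finset B)
    (hD : ∀ Θ : Finset (Fin n),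
      (k : ℤ) + Θ.card - n ≤ (radoR f (D.filter (fun j => b j ∈ Θ)) : ℤ)) :
    ∃ P : Finset B, P ⊆ D ∧ P.card = k ∧ Set.InjOn b ↑P ∧
      ∃ hfin : Fintype (f '' ↑P),
        LinearIndependent K ((↑) : (f '' ↑P) → (A → K)) ∧ radoR f P = k := by
  classical
  induction D using Finset.strongInduction with
  | _ D ih => ?_
  by_cases hinj : Set.InjOn b ↑D
  · -- base case: b injective on D; pick k independent columns among D
    have hr : (k : ℤ) ≤ (radoR f D : ℤ) := by
      have := hD Finset.univ
      simp only [Finset.mem_univ, Finset.filter_true, Finset.card_univ,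
        Fintype.card_fin] at this
      omega
    have hrk : k ≤ radoR f D := by exact_mod_cast hr
    obtain ⟨t, htsub, htspan, htind⟩ := exists_linearIndependent K (f '' ↑D)
    have htfin : t.Finite := Set.Finite.subset (Set.toFinite _) htsub
    haveI := htfin.fintype
    have hcard : finrank K (span K t) = t.toFinset.card :=
      finrank_span_set_eq_card htind
    have hk : k ≤ t.toFinset.card := by
      rw [← hcard, htspan]; exact hrk
    obtain ⟨t', ht'sub, ht'card⟩ := Finset.exists_subset_card_eq hk
    have ht'sub' : (↑t' : Set (A → K)) ⊆ t := by
      intro v hv; exact Set.mem_toFinset.mp (ht'sub hv)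
    have ht'ind := LinearIndepOn.mono (R := K) (v := id) (s := t) htind ht'sub'
    -- choose preimages in D
    have hmem : ∀ v : {v // v ∈ t'}, ∃ j, j ∈ (↑D : Set B) ∧ f j = v.1 :=
      fun v => htsub (ht'sub' v.2)
    set g : {v // v ∈ t'} → B := fun v => (hmem v).choose with hg
    have hg1 : ∀ v, g v ∈ D := fun v => (hmem v).choose_spec.1
    have hg2 : ∀ v, f (g v) = v.1 := fun v => (hmem v).choose_spec.2
    have hginj : Function.Injective g := by
      intro v w hvw
      have := (hg2 v).symm.trans (congrArg f hvw) |>.trans (hg2 w)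
      exact Subtype.ext this
    refine ⟨t'.attach.image g, ?_, ?_, ?_, ?_⟩
    · intro j hj
      simp only [Finset.mem_image] at hj
      obtain ⟨v, -, rfl⟩ := hj
      exact hg1 v
    · rw [Finset.card_image_of_injective _ hginj, Finset.card_attach, ht'card]
    · refine hinj.mono ?_
      intro j hj
      simp only [Finset.coe_image, Finset.mem_image, Set.mem_image] at hj
      obtain ⟨v, -, rfl⟩ := hj
      exact hg1 v
    · have himg : f '' ↑(t'.attach.image g) = (↑t' : Set (A → K)) := by
        ext v
        simp only [Finset.coe_image, Set.mem_image, Finset.mem_coe, Finset.mem_image,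
          Finset.mem_attach, true_and]
        constructor
        · rintro ⟨j, ⟨w, rfl⟩, rfl⟩
          rw [hg2 w]; exact w.2
        · intro hv
          exact ⟨g ⟨v, hv⟩, ⟨⟨v, hv⟩, rfl⟩, hg2 _⟩
      rw [himg]
      refine ⟨FinsetCoe.fintype t', ht'ind, ?_⟩
      unfold radoR
      rw [himg, finrank_span_finset_eq_card ht'ind, ht'card]
  · -- inductive step: some class has two elements in D
    rw [Set.InjOn] at hinj
    push_neg at hinj
    obtain ⟨x, hx, y, hy, hbxy, hxy⟩ := hinj
    set c := b x with hc
    have hby : b y = c := hbxy.symm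
    -- claim: we can delete x or y keeping the rank condition
    have claim : ∃ z, z ∈ D ∧ ∀ Θ : Finset (Fin n),
        (k : ℤ) + Θ.card - n ≤ (radoR f ((D.erase z).filter (fun j => b j ∈ Θ)) : ℤ) := by
      by_contra hcon
      push_neg at hcon
      obtain ⟨Θ₁, hΘ₁⟩ := hcon x hx
      obtain ⟨Θ₂, hΘ₂⟩ := hcon y hy
      -- c must be in both Θ₁ and Θ₂
      have hcΘ₁ : c ∈ Θ₁ := by
        by_contra hcn
        have : (D.erase x).filter (fun j => b j ∈ Θ₁) = D.filter (fun j => b j ∈ Θ₁) := by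
          rw [Finset.filter_erase]
          refine Finset.erase_eq_of_notMem ?_
          simp only [Finset.mem_filter, not_and]
          intro _; rw [← hc]; exact hcn
        rw [this] at hΘ₁
        exact absurd (hD Θ₁) (not_le.mpr hΘ₁)
      have hcΘ₂ : c ∈ Θ₂ := by
        by_contra hcn
        have : (D.erase y).filter (fun j => b j ∈ Θ₂) = D.filter (fun j => b j ∈ Θ₂) := by
          rw [Finset.filter_erase]
          refine Finset.erase_eq_of_notMem ?_
          simp only [Finset.mem_filter, not_and]
          intro _; rw [hby]; exact hcn
        rw [this] at hΘ₂
        exact absurd (hD Θ₂) (not_le.mpr hΘ₂)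
      set S := (D.erase x).filter (fun j => b j ∈ Θ₁) with hS
      set T := (D.erase y).filter (fun j => b j ∈ Θ₂) with hT
      have hsub1 : D.filter (fun j => b j ∈ Θ₁ ∪ Θ₂) ⊆ S ∪ T := by
        intro j hj
        simp only [Finset.mem_filter, Finset.mem_union] at hj
        obtain ⟨hjD, hj12⟩ := hj
        simp only [hS, hT, Finset.mem_union, Finset.mem_filter, Finset.mem_erase]
        by_cases hjx : j = x
        · subst hjx
          exact Or.inr ⟨⟨hxy, hjD⟩, by rw [← hc]; exact hcΘ₂⟩
        · by_cases hjy : j = y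
          · subst hjy
            exact Or.inl ⟨⟨Ne.symm hxy, hjD⟩, by rw [hby]; exact hcΘ₁⟩
          · rcases hj12 with h1 | h2
            · exact Or.inl ⟨⟨hjx, hjD⟩, h1⟩
            · exact Or.inr ⟨⟨hjy, hjD⟩, h2⟩
      have hsub2 : D.filter (fun j => b j ∈ (Θ₁ ∩ Θ₂).erase c) ⊆ S ∩ T := by
        intro j hj
        simp only [Finset.mem_filter, Finset.mem_erase, Finset.mem_inter] at hj
        obtain ⟨hjD, hjc, hj1, hj2⟩ := hj
        have hjx : j ≠ x := fun h => hjc (by rw [h, ← hc])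
        have hjy : j ≠ y := fun h => hjc (by rw [h, hby])
        simp only [hS, hT, Finset.mem_inter, Finset.mem_filter, Finset.mem_erase]
        exact ⟨⟨⟨hjx, hjD⟩, hj1⟩, ⟨⟨hjy, hjD⟩, hj2⟩⟩
      have hm1 : radoR f (D.filter (fun j => b j ∈ Θ₁ ∪ Θ₂)) ≤ radoR f (S ∪ T) :=
        radoR_mono f hsub1
      have hm2 : radoR f (D.filter (fun j => b j ∈ (Θ₁ ∩ Θ₂).erase c)) ≤ radoR f (S ∩ T) :=
        radoR_mono f hsub2
      have hsubmod := radoR_submodular f S T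
      have hb1 := hD (Θ₁ ∪ Θ₂)
      have hb2 := hD ((Θ₁ ∩ Θ₂).erase c)
      have hcards : (Θ₁ ∪ Θ₂).card + (Θ₁ ∩ Θ₂).card = Θ₁.card + Θ₂.card :=
        Finset.card_union_add_card_inter _ _
      have hcerase : ((Θ₁ ∩ Θ₂).erase c).card = (Θ₁ ∩ Θ₂).card - 1 :=
        Finset.card_erase_of_mem (Finset.mem_inter.mpr ⟨hcΘ₁, hcΘ₂⟩)
      have hcpos : 1 ≤ (Θ₁ ∩ Θ₂).card :=
        Finset.card_pos.mpr ⟨c, Finset.mem_inter.mpr ⟨hcΘ₁, hcΘ₂⟩⟩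
      omega
    obtain ⟨z, hz, hcond⟩ := claim
    obtain ⟨P, hPD, hrest⟩ :=
      ih (D.erase z) (Finset.erase_ssubset hz) hcond
    exact ⟨P, hPD.trans (Finset.erase_subset _ _), hrest⟩

end RadoAux

/-- Rank of a column-submatrix equals the rank of the span of the corresponding columns. -/
lemma rank_submatrix_eq_radoR {K : Type*} [Field K] {A B : Type*} [Fintype A] [Fintype B]
    {ι : Type*} [Fintype ι] (M : Matrix A B K) (g : ι → B) :
    (M.submatrix id g).rank =
      finrank K (span K ((fun j => fun i => M i j) '' Set.range g)) := by
  rw [Matrix.rank_eq_finrank_span_cols]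
  have : Set.range (M.submatrix id g).col = (fun j => fun i => M i j) '' Set.range g := by
    rw [show (M.submatrix id g).col = (fun j => fun i => M i j) ∘ g from rfl, Set.range_comp]
  rw [this]

/-- Rado–Perfect ("if" direction): if for every set Θ of classes the rank of the
columns in ⋃Θ is at least k + |Θ| - n, then there is a partial transversal P of
size k whose column-submatrix has rank k. Classes are given by b : B → Fin n. -/
theorem stmt_5 {K : Type*} [Field K] {A B : Type*} [Fintype A] [Fintype B]
    [DecidableEq B] {n k : ℕ} (M : Matrix A B K) (b : B → Fin n)
    (h : ∀ Θ : Finset (Fin n),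
      (k : ℤ) + Θ.card - n ≤
        ((M.submatrix id (fun j : {j : B // b j ∈ Θ} => (j : B))).rank : ℤ)) :
    ∃ P : Finset B, P.card = k ∧ Set.InjOn b ↑P ∧
      (M.submatrix id (fun j : {j : B // j ∈ P} => (j : B))).rank = k := by
  classical
  set f : B → (A → K) := fun j => fun i => M i j with hf
  have key : ∀ Θ : Finset (Fin n),
      ((M.submatrix id (fun j : {j : B // b j ∈ Θ} => (j : B))).rank : ℤ) =
      (radoR f (Finset.univ.filter (fun j => b j ∈ Θ)) : ℤ) := by
    intro Θ
    congr 1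
    rw [rank_submatrix_eq_radoR]
    unfold radoR
    have hset : (fun j => fun i => M i j) ''
        Set.range (fun j : {j : B // b j ∈ Θ} => (j : B)) =
        f '' ↑(Finset.univ.filter (fun j => b j ∈ Θ)) := by
      rw [Subtype.range_coe_subtype]
      congr 1
      ext j
      simp
    rw [hset]
  have hD : ∀ Θ : Finset (Fin n),
      (k : ℤ) + Θ.card - n ≤
        (radoR f (Finset.univ.filter (fun j => b j ∈ Θ)) : ℤ) := by
    intro Θ
    rw [← key Θ]
    exact h Θ
  obtain ⟨P, -, hPcard, hPinj, -, -, hPrank⟩ := rado_aux f b k Finset.univ hD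
  refine ⟨P, hPcard, hPinj, ?_⟩
  rw [rank_submatrix_eq_radoR]
  unfold radoR at hPrank
  have hset : (fun j => fun i => M i j) ''
      Set.range (fun j : {j : B // j ∈ P} => (j : B)) = f '' (↑P : Set B) := by
    rw [Subtype.range_coe_subtype]
    rfl
  rw [hset]
  exact hPrank
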